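/- Any subgroup of F₂ × F₂ that is isomorphic to F₂ × F₂ and is contained in a direct product decomposition ⟨a,b⟩ × ⟨c,d⟩ (with ⟨a,b⟩, ⟨c,d⟩ free of rank 2) has the form L₁ × L₂ where L₁ ≤ ⟨a,b⟩ and L₂ ≤ ⟨c,d⟩. -/

import Mathlib

open FreeGroup

-- Lemma B': centralizer of a generator consists of its powers
private lemma pow_of_commute_of {α : Type*} [DecidableEq α] (a : α) :
    ∀ (n : ℕ) (z : FreeGroup α), z.toWord.length = n → Commute z (FreeGroup.of a) →
      ∃ m : ℤ, z = FreeGroup.of a ^ m := by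
  intro n
  induction n using Nat.strong_induction_on with
  | _ n ih =>
    intro z hlen hz
    have hred : reduce z.toWord = z.toWord := reduce_toWord z
    match hw : z.toWord with
    | [] =>
      refine ⟨0, ?_⟩
      rw [zpow_zero, ← toWord_eq_nil_iff, hw]
    | (c, d) :: t =>
      rw [hw] at hred
      by_cases hca : c = a
      · subst hca
        cases d with
        | true =>
          -- z = of c * z', z' := (of c)⁻¹ * z, toWord z' = t
          set z' := (FreeGroup.of c)⁻¹ * z with hz'
          have hzw : z = FreeGroup.mk ((c, true) :: t) := by rw [← hw, mk_toWord]
          have h1 : z'.toWord = t := by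
            rw [hz', hzw]
            show ((FreeGroup.mk [(c, true)])⁻¹ * FreeGroup.mk ((c, true) :: t)).toWord = t
            rw [inv_mk, mul_mk, toWord_mk]
            have : invRev [(c, true)] = [(c, false)] := by simp [invRev]
            rw [this]
            show reduce ((c, false) :: (c, true) :: t) = t
            rw [reduce.cons, hred]
            simp
          have hcomm' : Commute z' (FreeGroup.of c) :=
            Commute.mul_left (Commute.refl _).inv_left hz
          have hlt : z'.toWord.length < n := by
            rw [h1, ← hlen, hw]; simp
          obtain ⟨m, hm⟩ := ih _ hlt z' rfl hcomm'
          refine ⟨1 + m, ?_⟩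
          have : z = FreeGroup.of c * z' := by rw [hz']; group
          rw [this, hm, zpow_one_add]
        | false =>
          set z' := FreeGroup.of c * z with hz'
          have hzw : z = FreeGroup.mk ((c, false) :: t) := by rw [← hw, mk_toWord]
          have h1 : z'.toWord = t := by
            rw [hz', hzw]
            show (FreeGroup.mk [(c, true)] * FreeGroup.mk ((c, false) :: t)).toWord = t
            rw [mul_mk, toWord_mk]
            show reduce ((c, true) :: (c, false) :: t) = t
            rw [reduce.cons, hred]
            simp
          have hcomm' : Commute z' (FreeGroup.of c) :=
            Commute.mul_left (Commute.refl _) hz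
          have hlt : z'.toWord.length < n := by
            rw [h1, ← hlen, hw]; simp
          obtain ⟨m, hm⟩ := ih _ hlt z' rfl hcomm'
          refine ⟨-1 + m, ?_⟩
          have : z = (FreeGroup.of c)⁻¹ * z' := by rw [hz']; group
          rw [this, hm, zpow_add, zpow_neg, zpow_one]
      · -- contradiction : first letters differ
        exfalso
        have hzw : z = FreeGroup.mk ((c, d) :: t) := by rw [← hw, mk_toWord]
        have h1 : (FreeGroup.of a * z).toWord = (a, true) :: (c, d) :: t := by
          rw [hzw]
          show (FreeGroup.mk [(a, true)] * FreeGroup.mk ((c, d) :: t)).toWord = _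
          rw [mul_mk, toWord_mk]
          show reduce ((a, true) :: (c, d) :: t) = _
          rw [reduce.cons, hred]
          simp [Ne.symm hca]
        have h2 : (z * FreeGroup.of a).toWord = reduce (((c, d) :: t) ++ [(a, true)]) := by
          rw [hzw]
          show (FreeGroup.mk ((c, d) :: t) * FreeGroup.mk [(a, true)]).toWord = _
          rw [mul_mk, toWord_mk]
        have heq : reduce (((c, d) :: t) ++ [(a, true)]) = (a, true) :: (c, d) :: t := by
          rw [← h2, hz, h1]
        have hR : Red (((c, d) :: t) ++ [(a, true)]) ((a, true) :: (c, d) :: t) := by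
          rw [← heq]; exact reduce.red
        have hsub := hR.sublist
        have hlen' : ((a, true) :: (c, d) :: t).length = (((c, d) :: t) ++ [(a, true)]).length := by
          simp
        have h3 := hsub.eq_of_length hlen'
        rw [List.cons_append] at h3
        injection h3 with h4 _
        exact hca (congrArg Prod.fst h4).symm


-- Lemma C
private lemma eq_one_of_commute_two {α : Type*} {a b : α} (hab : a ≠ b) {z : FreeGroup α}
    (h1 : Commute z (FreeGroup.of a)) (h2 : Commute z (FreeGroup.of b)) : z = 1 := by
  classical
  obtain ⟨n, hn⟩ := pow_of_commute_of a _ z rfl h1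
  obtain ⟨m, hm⟩ := pow_of_commute_of b _ z rfl h2
  let φ : FreeGroup α →* Multiplicative ℤ :=
    FreeGroup.lift (fun x => if x = b then Multiplicative.ofAdd 1 else 1)
  have ha : φ (FreeGroup.of a) = 1 := by simp [φ, FreeGroup.lift_apply_of, hab]
  have hb : φ (FreeGroup.of b) = Multiplicative.ofAdd 1 := by simp [φ, FreeGroup.lift_apply_of]
  have h3 : φ z = 1 := by rw [hn, map_zpow, ha, one_zpow]
  have h4 : φ z = Multiplicative.ofAdd m := by
    rw [hm, map_zpow, hb, ← ofAdd_zsmul, smul_eq_mul, mul_one]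
  have hm0 : m = 0 := by
    have := h3.symm.trans h4
    simpa using congrArg Multiplicative.toAdd this.symm
  rw [hm, hm0, zpow_zero]

-- abelian when subsingleton generators
private lemma commute_of_subsingleton {S : Type*} [Subsingleton S] (u v : FreeGroup S) :
    Commute u v := by
  cases isEmpty_or_nonempty S with
  | inl h =>
    have key : ∀ x : FreeGroup S, x = 1 := by
      intro x
      induction x with
      | C1 => rfl
      | of s => exact h.elim s
      | inv_of s _ => exact h.elim s
      | mul x y hx hy => rw [hx, hy, one_mul]
    rw [key u, key v]
  | inr h =>
    obtain ⟨a⟩ := h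
    have key : ∀ x : FreeGroup S, ∃ n : ℤ, x = FreeGroup.of a ^ n := by
      intro x
      induction x with
      | C1 => exact ⟨0, by rw [zpow_zero]⟩
      | of s => exact ⟨1, by rw [Subsingleton.elim s a, zpow_one]⟩
      | inv_of s hs => obtain ⟨n, hn⟩ := hs; exact ⟨-n, by rw [hn, zpow_neg]⟩
      | mul x y hx hy =>
        obtain ⟨n, hn⟩ := hx; obtain ⟨m, hm⟩ := hy
        exact ⟨n + m, by rw [hn, hm, zpow_add]⟩
    obtain ⟨n, hn⟩ := key u
    obtain ⟨m, hm⟩ := key v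
    rw [hn, hm]
    exact (Commute.refl _).zpow_zpow n m

-- distinct generators don't commute
private lemma not_commute_of {α : Type*} {a b : α} (hab : a ≠ b) :
    ¬ Commute (FreeGroup.of a) (FreeGroup.of b) := by
  have hne : ¬ Commute (Equiv.swap (0 : Fin 3) 1) (Equiv.swap (1 : Fin 3) 2) := by
    simp only [Commute, SemiconjBy]
    intro h
    have := DFunLike.congr_fun h 2
    simp [Equiv.swap_apply_def] at this
  classical
  intro hcom
  let f : α → Equiv.Perm (Fin 3) := fun x =>
    if x = a then Equiv.swap 0 1 else if x = b then Equiv.swap 1 2 else 1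
  have := hcom.map (FreeGroup.lift f)
  rw [FreeGroup.lift_apply_of, FreeGroup.lift_apply_of] at this
  simp only [f, if_pos rfl, if_neg hab.symm, if_neg, if_pos] at this
  exact absurd this hne



-- Commutative transitivity (fact *)
private lemma centralizer_trivial {F : Type} [Group F] [IsFreeGroup F] {x₁ x₂ z : F}
    (h : ¬ Commute x₁ x₂) (h1 : Commute z x₁) (h2 : Commute z x₂) : z = 1 := by
  set H : Subgroup F := Subgroup.closure {x₁, x₂, z} with hH
  have hx₁ : x₁ ∈ H := Subgroup.subset_closure (by simp)
  have hx₂ : x₂ ∈ H := Subgroup.subset_closure (by simp)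
  have hzH : z ∈ H := Subgroup.subset_closure (by simp)
  have hcent : H ≤ Subgroup.centralizer {z} := by
    rw [hH, Subgroup.closure_le]
    rintro w hw
    rw [SetLike.mem_coe, Subgroup.mem_centralizer_iff]
    rintro g (rfl : g = z)
    rcases hw with rfl | rfl | rfl
    · exact h1
    · exact h2
    · rfl
  have hzcomm : ∀ w : H, Commute (⟨z, hzH⟩ : H) w := by
    rintro ⟨w, hw⟩
    have := hcent hw
    rw [Subgroup.mem_centralizer_iff] at this
    exact Subtype.ext (by simpa using this z rfl)
  let S := IsFreeGroup.Generators H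
  let eH : H ≃* FreeGroup S := IsFreeGroup.toFreeGroup H
  by_cases hS : ∃ a b : S, a ≠ b
  · obtain ⟨a, b, hab⟩ := hS
    have hcom : ∀ u : FreeGroup S, Commute (eH ⟨z, hzH⟩) u := by
      intro u
      have := (hzcomm (eH.symm u)).map eH.toMonoidHom
      simpa using this
    have := eq_one_of_commute_two hab (hcom (FreeGroup.of a)) (hcom (FreeGroup.of b))
    have hz1 : (⟨z, hzH⟩ : H) = 1 := by
      apply eH.injective
      rw [this]; exact (_root_.map_one eH).symm
    exact Subtype.ext_iff.1 hz1
  · exfalso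
    have : Subsingleton S := ⟨fun a b => by by_contra hne; exact hS ⟨a, b, hne⟩⟩
    have hab : Commute (eH ⟨x₁, hx₁⟩) (eH ⟨x₂, hx₂⟩) := commute_of_subsingleton _ _
    have := hab.map eH.symm.toMonoidHom
    simp only [MulEquiv.coe_toMonoidHom, MulEquiv.symm_apply_apply] at this
    exact h (congrArg Subtype.val (this : _))



private lemma prod_commute_iff {G H : Type*} [Monoid G] [Monoid H] {x y : G × H} :
    Commute x y ↔ Commute x.1 y.1 ∧ Commute x.2 y.2 := by
  constructor
  · intro h
    exact ⟨congrArg Prod.fst h, congrArg Prod.snd h⟩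
  · rintro ⟨h1, h2⟩
    exact Prod.ext h1 h2

/-- Any subgroup of `⟨a,b⟩ × ⟨c,d⟩ = F₂ × F₂` that is itself isomorphic to
`F₂ × F₂` decomposes compatibly with the direct product: it has the form
`L₁ × L₂` with `L₁ ≤ ⟨a,b⟩` and `L₂ ≤ ⟨c,d⟩`. -/
theorem F2_prod_F2_subgroup_is_product
    (L : Subgroup (FreeGroup (Fin 2) × FreeGroup (Fin 2)))
    (hiso : Nonempty (L ≃* (FreeGroup (Fin 2) × FreeGroup (Fin 2)))) :
    ∃ (L₁ : Subgroup (FreeGroup (Fin 2))) (L₂ : Subgroup (FreeGroup (Fin 2))),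
      L = L₁.prod L₂ := by
  obtain ⟨e⟩ := hiso
  set F := FreeGroup (Fin 2)
  -- the two "factors" of L, as functions
  set m : F → F × F := fun u => ((e.symm (u, 1) : L) : F × F) with hm_def
  set w : F → F × F := fun v => ((e.symm (1, v) : L) : F × F) with hw_def
  have hm_mem : ∀ u, m u ∈ L := fun u => (e.symm (u, 1)).2
  have hw_mem : ∀ v, w v ∈ L := fun v => (e.symm (1, v)).2
  -- elementwise commutation
  have hcomm : ∀ u v, Commute (m u) (w v) := by
    intro u v
    have h0 : Commute ((u, 1) : F × F) ((1, v) : F × F) :=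
      prod_commute_iff.2 ⟨(Commute.one_right u), (Commute.one_left v)⟩
    exact (h0.map e.symm.toMonoidHom).map L.subtype
  -- generation
  have hgen : ∀ l : L, (l : F × F) = m (e l).1 * w (e l).2 := by
    intro l
    have h1 : ((e l).1, (1 : F)) * ((1 : F), (e l).2) = e l := by
      rw [Prod.mk_mul_mk, mul_one, one_mul]
    have h2 : e.symm (((e l).1, 1) * (1, (e l).2)) = l := by
      rw [h1, e.symm_apply_apply]
    rw [hm_def, hw_def]
    dsimp only
    rw [← Subgroup.coe_mul, ← _root_.map_mul, h2]
  -- pulling noncommutation back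
  have hpull : ∀ x y : F × F, Commute ((e.symm x : L) : F × F) ((e.symm y : L) : F × F) →
      Commute x y := by
    intro x y hc
    have hc' : Commute (e.symm x) (e.symm y) := Subtype.ext_iff.2 (by
      rw [Subgroup.coe_mul, Subgroup.coe_mul]
      exact hc)
    have := hc'.map e.toMonoidHom
    simpa using this
  have h01 : ¬ Commute (FreeGroup.of (0 : Fin 2)) (FreeGroup.of (1 : Fin 2)) :=
    not_commute_of (by decide)
  have hM : ¬ Commute (m (FreeGroup.of 0)) (m (FreeGroup.of 1)) := by
    intro hc
    have := hpull _ _ hc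
    exact h01 (prod_commute_iff.1 this).1
  have hN : ¬ Commute (w (FreeGroup.of 0)) (w (FreeGroup.of 1)) := by
    intro hc
    have := hpull _ _ hc
    exact h01 (prod_commute_iff.1 this).2
  -- component-wise commutation between the factors
  have hc1 : ∀ u v, Commute (m u).1 (w v).1 := fun u v => (prod_commute_iff.1 (hcomm u v)).1
  have hc2 : ∀ u v, Commute (m u).2 (w v).2 := fun u v => (prod_commute_iff.1 (hcomm u v)).2
  refine ⟨L.map (MonoidHom.fst F F), L.map (MonoidHom.snd F F), ?_⟩
  -- key step: in either case, (x,1) ∈ L for x ∈ π₁ L and (1,y) ∈ L for y ∈ π₂ L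
  have main : (∀ l : L, ((l : F × F).1, (1 : F)) ∈ L ∧ ((1 : F), (l : F × F).2) ∈ L) := by
    rcases not_and_or.1 (fun hc => hM (prod_commute_iff.2 hc)) with hcase | hcase
    · -- π₁ of M-part is nonabelian
      have hw1 : ∀ v, (w v).1 = 1 := fun v =>
        centralizer_trivial hcase (hc1 (FreeGroup.of 0) v).symm (hc1 (FreeGroup.of 1) v).symm
      have hN2 : ¬ Commute (w (FreeGroup.of 0)).2 (w (FreeGroup.of 1)).2 := by
        intro hc
        exact hN (prod_commute_iff.2 ⟨by rw [hw1, hw1]; exact Commute.refl 1, hc⟩)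
      have hm2 : ∀ u, (m u).2 = 1 := fun u =>
        centralizer_trivial hN2 (hc2 u (FreeGroup.of 0)) (hc2 u (FreeGroup.of 1))
      intro l
      constructor
      · have h1 : ((l : F × F).1, (1 : F)) = m (e l).1 := by
          have := congrArg Prod.fst (hgen l)
          rw [Prod.fst_mul, hw1, mul_one] at this
          rw [this, ← hm2 (e l).1]
        rw [h1]; exact hm_mem _
      · have h2 : ((1 : F), (l : F × F).2) = w (e l).2 := by
          have := congrArg Prod.snd (hgen l)
          rw [Prod.snd_mul, hm2, one_mul] at this
          rw [this, ← hw1 (e l).2]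
        rw [h2]; exact hw_mem _
    · -- π₂ of M-part is nonabelian
      have hw2 : ∀ v, (w v).2 = 1 := fun v =>
        centralizer_trivial hcase (hc2 (FreeGroup.of 0) v).symm (hc2 (FreeGroup.of 1) v).symm
      have hN1 : ¬ Commute (w (FreeGroup.of 0)).1 (w (FreeGroup.of 1)).1 := by
        intro hc
        exact hN (prod_commute_iff.2 ⟨hc, by rw [hw2, hw2]; exact Commute.refl 1⟩)
      have hm1 : ∀ u, (m u).1 = 1 := fun u =>
        centralizer_trivial hN1 (hc1 u (FreeGroup.of 0)) (hc1 u (FreeGroup.of 1))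
      intro l
      constructor
      · have h1 : ((l : F × F).1, (1 : F)) = w (e l).2 := by
          have := congrArg Prod.fst (hgen l)
          rw [Prod.fst_mul, hm1, one_mul] at this
          rw [this, ← hw2 (e l).2]
        rw [h1]; exact hw_mem _
      · have h2 : ((1 : F), (l : F × F).2) = m (e l).1 := by
          have := congrArg Prod.snd (hgen l)
          rw [Prod.snd_mul, hw2, mul_one] at this
          rw [this, ← hm1 (e l).1]
        rw [h2]; exact hm_mem _
  -- conclude
  apply le_antisymm
  · intro k hk
    exact Subgroup.mem_prod.2
      ⟨Subgroup.mem_map.2 ⟨k, hk, rfl⟩, Subgroup.mem_map.2 ⟨k, hk, rfl⟩⟩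
  · rintro ⟨x, y⟩ hxy
    rw [Subgroup.mem_prod] at hxy
    obtain ⟨h1, h2⟩ := hxy
    obtain ⟨l1, hl1, hx⟩ := Subgroup.mem_map.1 h1
    obtain ⟨l2, hl2, hy⟩ := Subgroup.mem_map.1 h2
    have k1 := (main ⟨l1, hl1⟩).1
    have k2 := (main ⟨l2, hl2⟩).2
    simp only [Subgroup.coe_mk] at k1 k2
    have hx' : l1.1 = x := hx
    have hy' : l2.2 = y := hy
    rw [hx'] at k1
    rw [hy'] at k2
    have := L.mul_mem k1 k2
    rwa [Prod.mk_mul_mk, mul_one, one_mul] at this
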